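/- The equation of state satisfies the thermodynamic stability conditions: for all ρ > 0 and θ > 0, ∂p/∂ρ(ρ,θ) = θ·P'(ρ·θ^{-3/2}) > 0 and ∂e/∂θ(ρ,θ) = (9/4)·(θ^{3/2}/ρ)·((5/3)·P(Z) - P'(Z)·Z) > 0, where Z = ρ·θ^{-3/2}. -/

import Mathlib

/-- `P(Z) = Z` for `Z ≤ Z̃`, `P(Z) = (3/5)·Z^{5/3}·Z̃^{-2/3} + (2/5)·Z̃` for `Z > Z̃`. -/
noncomputable def Pfun (Zt Z : ℝ) : ℝ :=
  if Z ≤ Zt then Z else (3 / 5) * Z ^ ((5 : ℝ) / 3) * Zt ^ (-((2 : ℝ) / 3)) + (2 / 5) * Zt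

/-- The derivative of `P`: `P'(Z) = 1` for `Z ≤ Z̃`, `P'(Z) = (Z/Z̃)^{2/3}` for `Z > Z̃`. -/
noncomputable def P'fun (Zt Z : ℝ) : ℝ :=
  if Z ≤ Zt then 1 else (Z / Zt) ^ ((2 : ℝ) / 3)

/-- Pressure `p(ρ,θ) = θ^{5/2}·P(ρ·θ^{-3/2})`. -/
noncomputable def pfun (Zt ρ θ : ℝ) : ℝ :=
  θ ^ ((5 : ℝ) / 2) * Pfun Zt (ρ * θ ^ (-((3 : ℝ) / 2)))

/-- Specific internal energy `e(ρ,θ) = (3/2)·θ^{5/2}·P(ρ·θ^{-3/2})/ρ`. -/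
noncomputable def efun (Zt ρ θ : ℝ) : ℝ :=
  (3 / 2) * θ ^ ((5 : ℝ) / 2) * Pfun Zt (ρ * θ ^ (-((3 : ℝ) / 2))) / ρ

lemma hasDerivAt_g (Zt x : ℝ) (hx : 0 < x) :
    HasDerivAt (fun Z : ℝ => (3 / 5) * Z ^ ((5 : ℝ) / 3) * Zt ^ (-((2 : ℝ) / 3)) + (2 / 5) * Zt)
      (x ^ ((2 : ℝ) / 3) * Zt ^ (-((2 : ℝ) / 3))) x := by
  have h := (((Real.hasDerivAt_rpow_const (p := (5:ℝ)/3) (Or.inl hx.ne')).const_mul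
      ((3:ℝ)/5)).mul_const (Zt ^ (-((2:ℝ)/3)))).add_const ((2/5) * Zt)
  have h53 : (5:ℝ)/3 - 1 = 2/3 := by norm_num
  rw [h53] at h
  refine h.congr_deriv ?_
  ring

lemma g_tilde (Zt : ℝ) (hZt : 0 < Zt) :
    (3 / 5) * Zt ^ ((5 : ℝ) / 3) * Zt ^ (-((2 : ℝ) / 3)) + (2 / 5) * Zt = Zt := by
  rw [mul_assoc, ← Real.rpow_add hZt]
  norm_num
  ring

lemma hasDerivAt_Pfun (Zt : ℝ) (hZt : 0 < Zt) (Z : ℝ) (hZ : 0 < Z) :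
    HasDerivAt (Pfun Zt) (P'fun Zt Z) Z := by
  rcases lt_trichotomy Z Zt with h | h | h
  · have hP' : P'fun Zt Z = 1 := if_pos h.le
    rw [hP']
    have : Pfun Zt =ᶠ[nhds Z] id := by
      filter_upwards [Iio_mem_nhds h] with y hy
      simp [Pfun, (Set.mem_Iio.mp hy).le]
    exact (hasDerivAt_id Z).congr_of_eventuallyEq this
  · subst h
    have hP' : P'fun Z Z = 1 := if_pos le_rfl
    rw [hP']
    have h1 : HasDerivWithinAt (Pfun Z) 1 (Set.Iic Z) Z := by
      refine ((hasDerivAt_id Z).hasDerivWithinAt).congr (fun y hy => ?_) ?_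
      · simp only [Pfun, if_pos (Set.mem_Iic.mp hy), id]
      · simp only [Pfun, if_pos le_rfl, id]
    have h2 : HasDerivWithinAt (Pfun Z) 1 (Set.Ici Z) Z := by
      have hg := (hasDerivAt_g Z Z hZ).hasDerivWithinAt (s := Set.Ici Z)
      have he : Z ^ ((2:ℝ)/3) * Z ^ (-((2:ℝ)/3)) = 1 := by
        rw [← Real.rpow_add hZ]; norm_num
      rw [he] at hg
      refine hg.congr (fun y hy => ?_) ?_
      · rcases eq_or_lt_of_le (Set.mem_Ici.mp hy) with rfl | hy'
        · simp [Pfun, g_tilde Z hZ]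
        · simp [Pfun, not_le_of_gt hy']
      · simp [Pfun, g_tilde Z hZ]
    have := (h1.union h2)
    rw [Set.Iic_union_Ici] at this
    exact hasDerivWithinAt_univ.mp this
  · have hP' : P'fun Zt Z = Z ^ ((2:ℝ)/3) * Zt ^ (-((2:ℝ)/3)) := by
      rw [P'fun, if_neg (not_le_of_gt h), Real.div_rpow hZ.le hZt.le,
        Real.rpow_neg hZt.le, div_eq_mul_inv]
    rw [hP']
    refine (hasDerivAt_g Zt Z hZ).congr_of_eventuallyEq ?_
    filter_upwards [Ioi_mem_nhds h] with y hy
    simp [Pfun, not_le_of_gt (Set.mem_Ioi.mp hy)]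

lemma stab_pos (Zt : ℝ) (hZt : 0 < Zt) (Z : ℝ) (hZ : 0 < Z) :
    0 < (5 / 3) * Pfun Zt Z - P'fun Zt Z * Z := by
  by_cases h : Z ≤ Zt
  · simp only [Pfun, P'fun, if_pos h]
    nlinarith
  · push_neg at h
    simp only [Pfun, P'fun, if_neg (not_le.mpr h)]
    have e1 : (Z / Zt) ^ ((2:ℝ)/3) = Z ^ ((2:ℝ)/3) * Zt ^ (-((2:ℝ)/3)) := by
      rw [Real.div_rpow hZ.le hZt.le, Real.rpow_neg hZt.le, div_eq_mul_inv]
    have e2 : Z ^ ((2:ℝ)/3) * Z = Z ^ ((5:ℝ)/3) := by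
      nth_rewrite 2 [← Real.rpow_one Z]
      rw [← Real.rpow_add hZ]
      norm_num
    have : Z ^ ((2:ℝ)/3) * Zt ^ (-((2:ℝ)/3)) * Z = Z ^ ((5:ℝ)/3) * Zt ^ (-((2:ℝ)/3)) := by
      rw [mul_right_comm, e2]
    rw [e1, this]
    nlinarith

lemma P'fun_pos (Zt : ℝ) (hZt : 0 < Zt) (Z : ℝ) (hZ : 0 < Z) : 0 < P'fun Zt Z := by
  unfold P'fun
  split
  · norm_num
  · exact Real.rpow_pos_of_pos (div_pos hZ hZt) _

/-- Thermodynamic stability: for all `ρ > 0` and `θ > 0`,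
`∂p/∂ρ(ρ,θ) = θ·P'(ρ·θ^{-3/2}) > 0` and
`∂e/∂θ(ρ,θ) = (9/4)·(θ^{3/2}/ρ)·((5/3)·P(Z) - P'(Z)·Z) > 0`, where `Z = ρ·θ^{-3/2}`. -/
theorem stmt6 (Zt : ℝ) (hZt : 0 < Zt) :
    ∀ ρ θ : ℝ, 0 < ρ → 0 < θ →
      HasDerivAt (fun r => pfun Zt r θ) (θ * P'fun Zt (ρ * θ ^ (-((3 : ℝ) / 2)))) ρ ∧
      0 < θ * P'fun Zt (ρ * θ ^ (-((3 : ℝ) / 2))) ∧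
      HasDerivAt (fun t => efun Zt ρ t)
        ((9 / 4) * (θ ^ ((3 : ℝ) / 2) / ρ) *
          ((5 / 3) * Pfun Zt (ρ * θ ^ (-((3 : ℝ) / 2))) -
            P'fun Zt (ρ * θ ^ (-((3 : ℝ) / 2))) * (ρ * θ ^ (-((3 : ℝ) / 2))))) θ ∧
      0 < (9 / 4) * (θ ^ ((3 : ℝ) / 2) / ρ) *
          ((5 / 3) * Pfun Zt (ρ * θ ^ (-((3 : ℝ) / 2))) -
            P'fun Zt (ρ * θ ^ (-((3 : ℝ) / 2))) * (ρ * θ ^ (-((3 : ℝ) / 2)))) := by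
  intro ρ θ hρ hθ
  set Z : ℝ := ρ * θ ^ (-((3 : ℝ) / 2)) with hZdef
  have hZ : 0 < Z := mul_pos hρ (Real.rpow_pos_of_pos hθ _)
  have hT : (0:ℝ) < θ ^ ((3:ℝ)/2) := Real.rpow_pos_of_pos hθ _
  have h35 : θ ^ ((5:ℝ)/2) = θ * θ ^ ((3:ℝ)/2) := by
    rw [show (5:ℝ)/2 = 1 + 3/2 by norm_num, Real.rpow_add hθ, Real.rpow_one]
  have hm3 : θ ^ (-((3:ℝ)/2)) = (θ ^ ((3:ℝ)/2))⁻¹ := Real.rpow_neg hθ.le _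
  have hm5 : θ ^ (-((5:ℝ)/2)) = (θ * θ ^ ((3:ℝ)/2))⁻¹ := by
    rw [Real.rpow_neg hθ.le, h35]
  refine ⟨?_, ?_, ?_, ?_⟩
  · -- ∂p/∂ρ
    have hinner : HasDerivAt (fun r : ℝ => r * θ ^ (-((3:ℝ)/2))) (θ ^ (-((3:ℝ)/2))) ρ := by
      simpa using (hasDerivAt_id ρ).mul_const (θ ^ (-((3:ℝ)/2)))
    have hcomp := (hasDerivAt_Pfun Zt hZt Z hZ).comp ρ hinner
    have h := hcomp.const_mul (θ ^ ((5:ℝ)/2))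
    have heq : θ ^ ((5:ℝ)/2) * (P'fun Zt Z * θ ^ (-((3:ℝ)/2))) = θ * P'fun Zt Z := by
      rw [h35, hm3]
      field_simp
    rw [heq] at h
    exact h
  · exact mul_pos hθ (P'fun_pos Zt hZt Z hZ)
  · -- ∂e/∂θ
    have hA : HasDerivAt (fun t : ℝ => t ^ ((5:ℝ)/2)) ((5/2) * θ ^ ((3:ℝ)/2)) θ := by
      have := Real.hasDerivAt_rpow_const (p := (5:ℝ)/2) (Or.inl hθ.ne')
      convert this using 1
      norm_num
    have hB : HasDerivAt (fun t : ℝ => t ^ (-((3:ℝ)/2))) ((-(3/2)) * θ ^ (-((5:ℝ)/2))) θ := by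
      have := Real.hasDerivAt_rpow_const (p := -((3:ℝ)/2)) (Or.inl hθ.ne')
      convert this using 2
      norm_num
    have hC : HasDerivAt (fun t : ℝ => ρ * t ^ (-((3:ℝ)/2))) (ρ * ((-(3/2)) * θ ^ (-((5:ℝ)/2)))) θ :=
      hB.const_mul ρ
    have hD := (hasDerivAt_Pfun Zt hZt Z hZ).comp θ hC
    have hE := hA.mul hD
    have hF := (hE.const_mul ((3:ℝ)/2)).div_const ρ
    have hfeq : (fun t => efun Zt ρ t) =
        (fun t => 3/2 * (t ^ ((5:ℝ)/2) * Pfun Zt (ρ * t ^ (-((3:ℝ)/2)))) / ρ) := by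
      funext t
      simp only [efun]
      ring
    rw [hfeq]
    have heq : 3/2 * ((5/2) * θ ^ ((3:ℝ)/2) * Pfun Zt Z +
          θ ^ ((5:ℝ)/2) * (P'fun Zt Z * (ρ * ((-(3/2)) * θ ^ (-((5:ℝ)/2)))))) / ρ =
        (9/4) * (θ ^ ((3:ℝ)/2) / ρ) * ((5/3) * Pfun Zt Z - P'fun Zt Z * Z) := by
      rw [hZdef, h35, hm3, hm5]
      field_simp
      ring
    simp only [Function.comp_def] at hF
    rw [← hZdef, heq] at hF
    exact hF
  · exact mul_pos (mul_pos (by norm_num) (div_pos hT hρ)) (stab_pos Zt hZt Z hZ)
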